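/- (Necessary condition for identifiability.) A nonparametric conditional independence bivariate mixture model P(x,y) = ∑_{i=1}^C w_i f^(i)_x(x) f^(i)_y(y) with C ≥ 2 components is uniquely identifiable up to permutation of component labels only if for every ordered pair i ≠ j and each variate t ∈ {x,y}: esssup_t [ w_i f^(i)_t(t) / (w_i f^(i)_t(t) + w_j f^(j)_t(t)) ] = 1, where the essential supremum is with respect to the mixture's marginal measure on t. -/

import Mathlib

open MeasureTheory BigOperators

lemma myInt {α : Type*} [MeasurableSpace α] {μ : Measure α} {f : α → ℝ}
    (h : ∫ x, f x ∂μ = 1) : Integrable f μ := by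
  by_contra hc
  rw [integral_undef hc] at h
  norm_num at h

lemma sum_eq_of_two {C : ℕ} {i j : Fin C} (hij : i ≠ j) (f g : Fin C → ℝ)
    (h2 : f i + f j = g i + g j) (hk : ∀ k, k ≠ i → k ≠ j → f k = g k) :
    ∑ k, f k = ∑ k, g k := by
  classical
  have hjm : j ∈ Finset.univ.erase i := Finset.mem_erase.mpr ⟨hij.symm, Finset.mem_univ j⟩
  rw [← Finset.add_sum_erase _ f (Finset.mem_univ i), ← Finset.add_sum_erase _ g (Finset.mem_univ i),
      ← Finset.add_sum_erase _ f hjm, ← Finset.add_sum_erase _ g hjm]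
  have hrest : ∑ k ∈ (Finset.univ.erase i).erase j, f k
      = ∑ k ∈ (Finset.univ.erase i).erase j, g k := by
    refine Finset.sum_congr rfl fun k hkm => ?_
    obtain ⟨hkj, hki, -⟩ := Finset.mem_erase.mp hkm |>.imp id (Finset.mem_erase.mp)
    exact hk k hki hkj
  rw [hrest]; linarith

/-- If a permutation matches the weights, the number of zero weights is preserved. -/
lemma card_zero_eq {C : ℕ} (w w' : Fin C → ℝ) (σ : Equiv.Perm (Fin C))
    (h : ∀ k, w' k = w (σ k)) :
    (Finset.univ.filter fun k => w' k = 0).card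
      = (Finset.univ.filter fun k => w k = 0).card := by
  classical
  have h1 : (Finset.univ.filter fun k => w' k = 0)
      = (Finset.univ.filter fun k => w (σ k) = 0) := by
    ext k; simp [h k]
  rw [h1, ← Fintype.card_subtype, ← Fintype.card_subtype]
  exact Fintype.card_congr (σ.subtypeEquiv fun k => Iff.rfl)

lemma aux_lemma {C : ℕ} {Xt Yt : Type*} [MeasurableSpace Xt] [MeasurableSpace Yt]
    (μ : Measure Xt) (ν : Measure Yt) [SigmaFinite μ] [SigmaFinite ν]
    (w : Fin C → ℝ) (fx : Fin C → Xt → ℝ) (fy : Fin C → Yt → ℝ)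
    (hw_nonneg : ∀ i, 0 ≤ w i) (hw_sum : ∑ i, w i = 1)
    (hfx_meas : ∀ i, Measurable (fx i)) (hfy_meas : ∀ i, Measurable (fy i))
    (hfx_nonneg : ∀ i x, 0 ≤ fx i x) (hfy_nonneg : ∀ i y, 0 ≤ fy i y)
    (hfx_one : ∀ i, ∫ x, fx i x ∂μ = 1) (hfy_one : ∀ i, ∫ y, fy i y ∂ν = 1)
    (hident : ∀ (w' : Fin C → ℝ) (gx : Fin C → Xt → ℝ) (gy : Fin C → Yt → ℝ),
        (∀ i, 0 ≤ w' i) → ∑ i, w' i = 1 →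
        (∀ i, Measurable (gx i)) → (∀ i, Measurable (gy i)) →
        (∀ i x, 0 ≤ gx i x) → (∀ i y, 0 ≤ gy i y) →
        (∀ i, ∫ x, gx i x ∂μ = 1) → (∀ i, ∫ y, gy i y ∂ν = 1) →
        (∀ᵐ p ∂(μ.prod ν),
          ∑ i, w' i * gx i p.1 * gy i p.2 = ∑ i, w i * fx i p.1 * fy i p.2) →
        ∃ σ : Equiv.Perm (Fin C), ∀ i, w' i = w (σ i))
    (i j : Fin C) (hij : i ≠ j) :
    essSup (fun x => w i * fx i x / (w i * fx i x + w j * fx j x))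
        (μ.withDensity (fun x => ENNReal.ofReal (∑ k, w k * fx k x))) = 1 := by
  classical
  have hfx_int : ∀ k, Integrable (fx k) μ := fun k => myInt (hfx_one k)
  have hfy_int : ∀ k, Integrable (fy k) ν := fun k => myInt (hfy_one k)
  -- Case w i = 0 : construct a contradiction with identifiability.
  rcases eq_or_lt_of_le (hw_nonneg i) with hwi | hwi
  · exfalso
    -- some positive weight exists
    have hm : ∃ m, 0 < w m := by
      by_contra hall
      push_neg at hall
      have : ∑ k, w k = 0 := Finset.sum_eq_zero fun k _ => le_antisymm (hall k) (hw_nonneg k)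
      rw [hw_sum] at this; norm_num at this
    obtain ⟨m, hm⟩ := hm
    have hmi : m ≠ i := by
      intro h; rw [h] at hm; rw [← hwi] at hm; exact lt_irrefl _ hm
    set w' : Fin C → ℝ := fun k => if k = i then w m / 2 else if k = m then w m / 2 else w k
      with hw'def
    set gx' : Fin C → Xt → ℝ := fun k => if k = i then fx m else fx k with hgx'def
    set gy' : Fin C → Yt → ℝ := fun k => if k = i then fy m else fy k with hgy'def
    obtain ⟨σ, hσ⟩ := hident w' gx' gy'
      (by
        intro k; simp only [hw'def]
        split_ifs <;> [linarith; linarith; exact hw_nonneg k])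
      (by
        rw [← hw_sum]
        refine sum_eq_of_two (i := i) (j := m) (Ne.symm hmi) w' w ?_ ?_
        · simp only [hw'def, if_pos rfl, if_neg hmi, eq_self_iff_true, if_true, ← hwi]; ring
        · intro k hki hkm; simp only [hw'def, if_neg hki, if_neg hkm])
      (by intro k; simp only [hgx'def]; split_ifs <;> apply hfx_meas)
      (by intro k; simp only [hgy'def]; split_ifs <;> apply hfy_meas)
      (by intro k x; simp only [hgx'def]; split_ifs <;> apply hfx_nonneg)
      (by intro k y; simp only [hgy'def]; split_ifs <;> apply hfy_nonneg)
      (by intro k; simp only [hgx'def]; split_ifs <;> apply hfx_one)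
      (by intro k; simp only [hgy'def]; split_ifs <;> apply hfy_one)
      (by
        refine Filter.Eventually.of_forall fun p => ?_
        refine sum_eq_of_two (i := i) (j := m) (Ne.symm hmi) _ _ ?_ ?_
        · simp only [hw'def, hgx'def, hgy'def, if_pos rfl, if_neg hmi, eq_self_iff_true, if_true, ← hwi]; ring
        · intro k hki hkm
          simp only [hw'def, hgx'def, hgy'def, if_neg hki, if_neg hkm])
    -- zero-count contradiction
    have hcard := card_zero_eq w w' σ hσ
    have hB : (Finset.univ.filter fun k => w' k = 0)
        = (Finset.univ.filter fun k => w k = 0).erase i := by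
      ext k
      simp only [Finset.mem_filter, Finset.mem_erase, Finset.mem_univ, true_and]
      constructor
      · intro hk
        by_cases hki : k = i
        · exfalso; rw [hki] at hk; simp only [hw'def, if_pos rfl] at hk; linarith
        · by_cases hkm : k = m
          · exfalso; rw [hkm] at hk; simp only [hw'def, if_neg hmi, eq_self_iff_true, if_true] at hk; linarith
          · simp only [hw'def, if_neg hki, if_neg hkm] at hk; exact ⟨hki, hk⟩
      · rintro ⟨hki, hk⟩
        have hkm : k ≠ m := by intro h; rw [h] at hk; linarith
        simp only [hw'def, if_neg hki, if_neg hkm]; exact hk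
    have hiA : i ∈ (Finset.univ.filter fun k => w k = 0) := by
      simp [← hwi]
    rw [hB, Finset.card_erase_of_mem hiA] at hcard
    have hpos : 0 < (Finset.univ.filter fun k => w k = 0).card :=
      Finset.card_pos.mpr ⟨i, hiA⟩
    omega
  · -- main case: 0 < w i
    set g : Xt → ENNReal := fun x => ENNReal.ofReal (∑ k, w k * fx k x) with hgdef
    have hg_meas : Measurable g :=
      ENNReal.measurable_ofReal.comp
        (Finset.measurable_sum _ fun k _ => (hfx_meas k).const_mul _)
    have hs_nonneg : ∀ x, (0:ℝ) ≤ ∑ k, w k * fx k x :=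
      fun x => Finset.sum_nonneg fun k _ => mul_nonneg (hw_nonneg k) (hfx_nonneg k x)
    have hs_int : Integrable (fun x => ∑ k, w k * fx k x) μ :=
      integrable_finset_sum _ fun k _ => (hfx_int k).const_mul _
    set ρ := μ.withDensity g with hρdef
    have hρuniv : ρ Set.univ = 1 := by
      rw [hρdef, withDensity_apply _ MeasurableSet.univ, setLIntegral_univ,
        ← ofReal_integral_eq_lintegral_ofReal hs_int (Filter.Eventually.of_forall hs_nonneg)]
      have hint1 : ∫ x, ∑ k, w k * fx k x ∂μ = 1 := by
        rw [integral_finset_sum _ fun k _ => (hfx_int k).const_mul _]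
        have : ∀ k : Fin C, ∫ x, w k * fx k x ∂μ = w k := by
          intro k; rw [integral_const_mul, hfx_one k, mul_one]
        simp_rw [this]; exact hw_sum
      rw [hint1, ENNReal.ofReal_one]
    have hρne : ρ ≠ 0 := by
      intro h; rw [h] at hρuniv; simp at hρuniv
    haveI : (ae ρ).NeBot := ae_neBot.mpr hρne
    set r := fun x => w i * fx i x / (w i * fx i x + w j * fx j x) with hrdef
    have hab_nonneg : ∀ x, (0:ℝ) ≤ w i * fx i x + w j * fx j x := fun x =>
      add_nonneg (mul_nonneg (hw_nonneg i) (hfx_nonneg i x))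
        (mul_nonneg (hw_nonneg j) (hfx_nonneg j x))
    have hr0 : ∀ x, 0 ≤ r x := fun x =>
      div_nonneg (mul_nonneg (hw_nonneg i) (hfx_nonneg i x)) (hab_nonneg x)
    have hr1 : ∀ x, r x ≤ 1 := fun x =>
      div_le_one_of_le₀
        (le_add_of_nonneg_right (mul_nonneg (hw_nonneg j) (hfx_nonneg j x))) (hab_nonneg x)
    have hbddAbove : Filter.IsBoundedUnder (· ≤ ·) (ae ρ) r :=
      Filter.isBoundedUnder_of ⟨1, hr1⟩
    have hbddBelow : Filter.IsBoundedUnder (· ≥ ·) (ae ρ) r :=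
      Filter.isBoundedUnder_of ⟨0, hr0⟩
    have hub : essSup r ρ ≤ 1 :=
      Filter.limsup_le_of_le hbddBelow.isCoboundedUnder_le (Filter.Eventually.of_forall hr1)
    by_contra hne
    have hlt : essSup r ρ < 1 := lt_of_le_of_ne hub hne
    obtain ⟨c₀, hc₀l, hc₀r⟩ := exists_between hlt
    set c := max c₀ (1/2) with hcdef
    have hc1 : c < 1 := max_lt hc₀r (by norm_num)
    have hcpos : (0:ℝ) < c := lt_of_lt_of_le (by norm_num) (le_max_right _ _)
    have hev : ∀ᵐ x ∂ρ, r x < c := by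
      have h := ae_lt_of_essSup_lt hc₀l hbddAbove
      exact h.mono fun x hx => lt_of_lt_of_le hx (le_max_left _ _)
    have hμae : ∀ᵐ x ∂μ, g x ≠ 0 → r x < c := (ae_withDensity_iff hg_meas).mp hev
    set K := c / (1 - c) with hKdef
    have hK : 0 < K := div_pos hcpos (by linarith)
    have hdom : ∀ᵐ x ∂μ, w i * fx i x ≤ K * (w j * fx j x) := by
      filter_upwards [hμae] with x hx
      have ha : 0 ≤ w i * fx i x := mul_nonneg (hw_nonneg i) (hfx_nonneg i x)
      have hb : 0 ≤ w j * fx j x := mul_nonneg (hw_nonneg j) (hfx_nonneg j x)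
      by_cases hgx : g x = 0
      · have hs0 : (∑ k, w k * fx k x) ≤ 0 := by
          rw [hgdef] at hgx; exact ENNReal.ofReal_eq_zero.mp hgx
        have hle : w i * fx i x ≤ ∑ k, w k * fx k x :=
          Finset.single_le_sum
            (fun k _ => mul_nonneg (hw_nonneg k) (hfx_nonneg k x)) (Finset.mem_univ i)
        nlinarith
      · have hrx := hx hgx
        rw [hrdef] at hrx
        by_cases hab : w i * fx i x + w j * fx j x = 0
        · nlinarith
        · have habpos : 0 < w i * fx i x + w j * fx j x :=
            lt_of_le_of_ne (hab_nonneg x) (Ne.symm hab)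
          have h2 : w i * fx i x < c * (w i * fx i x + w j * fx j x) :=
            (div_lt_iff₀ habpos).mp hrx
          rw [hKdef, div_mul_eq_mul_div, le_div_iff₀ (by linarith : (0:ℝ) < 1 - c)]
          nlinarith
    have hwij : w i ≤ K * w j := by
      have h1 : ∫ x, w i * fx i x ∂μ ≤ ∫ x, K * (w j * fx j x) ∂μ :=
        integral_mono_ae ((hfx_int i).const_mul _) (((hfx_int j).const_mul _).const_mul _) hdom
      rw [integral_const_mul, integral_const_mul, integral_const_mul,
        hfx_one i, hfx_one j] at h1
      linarith
    have hwj : 0 < w j := by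
      rcases eq_or_lt_of_le (hw_nonneg j) with h | h
      · exfalso; rw [← h] at hwij; nlinarith
      · exact h
    set δ₀ := min (1/K) (w j / (2 * w i)) with hδ₀def
    have hδ₀ : 0 < δ₀ := lt_min (by positivity) (by positivity)
    obtain ⟨δ, ⟨⟨hδpos, hδlt⟩, hδbad⟩⟩ :=
      ((Set.Ioo_infinite hδ₀).diff
        (Set.finite_range fun m : Fin C => w m / w i - 1)).nonempty
    have hδne : ∀ m, w i * (1 + δ) ≠ w m := by
      intro m h
      refine hδbad ⟨m, ?_⟩
      show w m / w i - 1 = δ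
      rw [← h]
      field_simp
      ring
    have hδK : δ * K ≤ 1 := by
      have h := lt_of_lt_of_le hδlt (min_le_left _ _)
      rw [lt_div_iff₀ hK] at h; linarith
    have hδwij : δ * w i < w j / 2 := by
      have h := lt_of_lt_of_le hδlt (min_le_right _ _)
      rw [lt_div_iff₀ (by positivity : (0:ℝ) < 2 * w i)] at h; nlinarith
    have hwj' : 0 < w j - δ * w i := by linarith
    set w' : Fin C → ℝ := fun k =>
      if k = i then w i * (1 + δ) else if k = j then w j - δ * w i else w k with hw'def
    set gx' : Fin C → Xt → ℝ := fun k =>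
      if k = j then
        (fun x => max ((w j * fx j x - δ * (w i * fx i x)) / (w j - δ * w i)) 0)
      else fx k with hgx'def
    set gy' : Fin C → Yt → ℝ := fun k =>
      if k = i then (fun y => (fy i y + δ * fy j y) / (1 + δ)) else fy k with hgy'def
    have hraw : ∀ᵐ x ∂μ, 0 ≤ w j * fx j x - δ * (w i * fx i x) := by
      filter_upwards [hdom] with x hx
      have hb : 0 ≤ w j * fx j x := mul_nonneg (hw_nonneg j) (hfx_nonneg j x)
      nlinarith [mul_le_mul_of_nonneg_left hx (le_of_lt hδpos)]
    have hgxj_ae : (fun x => max ((w j * fx j x - δ * (w i * fx i x)) / (w j - δ * w i)) 0)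
        =ᵐ[μ] fun x => (w j * fx j x - δ * (w i * fx i x)) / (w j - δ * w i) := by
      filter_upwards [hraw] with x hx
      exact max_eq_left (div_nonneg hx (le_of_lt hwj'))
    obtain ⟨σ, hσ⟩ := hident w' gx' gy'
      (by
        intro k; simp only [hw'def]
        split_ifs
        · nlinarith
        · linarith
        · exact hw_nonneg k)
      (by
        rw [← hw_sum]
        refine sum_eq_of_two hij w' w ?_ ?_
        · simp only [hw'def, if_pos rfl, if_neg (Ne.symm hij), eq_self_iff_true, if_true]; ring
        · intro k hki hkj; simp only [hw'def, if_neg hki, if_neg hkj])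
      (by
        intro k; simp only [hgx'def]
        split_ifs
        · exact ((((hfx_meas j).const_mul _).sub
            (((hfx_meas i).const_mul _).const_mul _)).div_const _).max measurable_const
        · exact hfx_meas k)
      (by
        intro k; simp only [hgy'def]
        split_ifs
        · exact ((hfy_meas i).add ((hfy_meas j).const_mul _)).div_const _
        · exact hfy_meas k)
      (by
        intro k x; simp only [hgx'def]
        split_ifs
        · exact le_max_right _ _
        · exact hfx_nonneg k x)
      (by
        intro k y; simp only [hgy'def]
        split_ifs
        · exact div_nonneg
            (add_nonneg (hfy_nonneg i y) (mul_nonneg (le_of_lt hδpos) (hfy_nonneg j y)))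
            (by linarith)
        · exact hfy_nonneg k y)
      (by
        intro k
        by_cases hk : k = j
        · simp only [hgx'def, if_pos hk]
          rw [integral_congr_ae hgxj_ae]
          have : ∫ x, (w j * fx j x - δ * (w i * fx i x)) / (w j - δ * w i) ∂μ
              = (w j * 1 - δ * (w i * 1)) / (w j - δ * w i) := by
            rw [integral_div,
              integral_sub ((hfx_int j).const_mul _) (((hfx_int i).const_mul _).const_mul _),
              integral_const_mul, integral_const_mul, integral_const_mul, hfx_one, hfx_one]
          rw [this]
          field_simp
        · simp only [hgx'def, if_neg hk]; exact hfx_one k)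
      (by
        intro k
        by_cases hk : k = i
        · simp only [hgy'def, if_pos hk]
          have : ∫ y, (fy i y + δ * fy j y) / (1 + δ) ∂ν = (1 + δ * 1) / (1 + δ) := by
            rw [integral_div, integral_add (hfy_int i) ((hfy_int j).const_mul _),
              integral_const_mul, hfy_one, hfy_one]
          rw [this]
          field_simp
        · simp only [hgy'def, if_neg hk]; exact hfy_one k)
      (by
        have h1 : ∀ᵐ p ∂(μ.prod ν), 0 ≤ w j * fx j p.1 - δ * (w i * fx i p.1) :=
          Measure.quasiMeasurePreserving_fst.ae hraw
        filter_upwards [h1] with p hp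
        refine sum_eq_of_two hij _ _ ?_ ?_
        · simp only [hw'def, hgx'def, hgy'def, if_pos rfl, if_neg hij, if_neg (Ne.symm hij),
            eq_self_iff_true, if_true]
          rw [max_eq_left (div_nonneg hp (le_of_lt hwj'))]
          field_simp [(show w j - w i * δ ≠ 0 by rw [mul_comm]; exact hwj'.ne')]
          ring
        · intro k hki hkj
          simp only [hw'def, hgx'def, hgy'def, if_neg hki, if_neg hkj])
    have hcontra := hσ i
    simp only [hw'def, eq_self_iff_true, if_true] at hcontra
    exact hδne (σ i) hcontra

theorem statement_12 {C : ℕ} (hC : 2 ≤ C)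
    {Xt Yt : Type*} [MeasurableSpace Xt] [MeasurableSpace Yt]
    (μ : Measure Xt) (ν : Measure Yt) [SigmaFinite μ] [SigmaFinite ν]
    (w : Fin C → ℝ) (fx : Fin C → Xt → ℝ) (fy : Fin C → Yt → ℝ)
    (hw_nonneg : ∀ i, 0 ≤ w i) (hw_sum : ∑ i, w i = 1)
    (hfx_meas : ∀ i, Measurable (fx i)) (hfy_meas : ∀ i, Measurable (fy i))
    (hfx_nonneg : ∀ i x, 0 ≤ fx i x) (hfy_nonneg : ∀ i y, 0 ≤ fy i y)
    (hfx_one : ∀ i, ∫ x, fx i x ∂μ = 1) (hfy_one : ∀ i, ∫ y, fy i y ∂ν = 1)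
    -- identifiability up to permutation of the component labels:
    (hident : ∀ (w' : Fin C → ℝ) (gx : Fin C → Xt → ℝ) (gy : Fin C → Yt → ℝ),
        (∀ i, 0 ≤ w' i) → ∑ i, w' i = 1 →
        (∀ i, Measurable (gx i)) → (∀ i, Measurable (gy i)) →
        (∀ i x, 0 ≤ gx i x) → (∀ i y, 0 ≤ gy i y) →
        (∀ i, ∫ x, gx i x ∂μ = 1) → (∀ i, ∫ y, gy i y ∂ν = 1) →
        (∀ᵐ p ∂(μ.prod ν),
          ∑ i, w' i * gx i p.1 * gy i p.2 = ∑ i, w i * fx i p.1 * fy i p.2) →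
        ∃ σ : Equiv.Perm (Fin C),
          ∀ i, w' i = w (σ i) ∧ gx i =ᵐ[μ] fx (σ i) ∧ gy i =ᵐ[ν] fy (σ i)) :
    ∀ i j : Fin C, i ≠ j →
      essSup (fun x => w i * fx i x / (w i * fx i x + w j * fx j x))
          (μ.withDensity (fun x => ENNReal.ofReal (∑ k, w k * fx k x))) = 1 ∧
      essSup (fun y => w i * fy i y / (w i * fy i y + w j * fy j y))
          (ν.withDensity (fun y => ENNReal.ofReal (∑ k, w k * fy k y))) = 1 := by
  intro i j hij
  constructor
  · refine aux_lemma μ ν w fx fy hw_nonneg hw_sum hfx_meas hfy_meas hfx_nonneg hfy_nonneg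
      hfx_one hfy_one ?_ i j hij
    intro w' gx gy h1 h2 h3 h4 h5 h6 h7 h8 h9
    obtain ⟨σ, hσ⟩ := hident w' gx gy h1 h2 h3 h4 h5 h6 h7 h8 h9
    exact ⟨σ, fun k => (hσ k).1⟩
  · refine aux_lemma ν μ w fy fx hw_nonneg hw_sum hfy_meas hfx_meas hfy_nonneg hfx_nonneg
      hfy_one hfx_one ?_ i j hij
    intro w' g1 g2 h1 h2 h3 h4 h5 h6 h7 h8 h9
    have h9' : ∀ᵐ p ∂(μ.prod ν),
        ∑ k, w' k * g2 k p.1 * g1 k p.2 = ∑ k, w k * fx k p.1 * fy k p.2 := by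
      have h := (Measure.measurePreserving_swap (μ := μ) (ν := ν)).quasiMeasurePreserving.ae h9
      filter_upwards [h] with p hp
      have e1 : ∑ k, w' k * g2 k p.1 * g1 k p.2 = ∑ k, w' k * g1 k p.2 * g2 k p.1 :=
        Finset.sum_congr rfl fun k _ => by ring
      have e2 : ∑ k, w k * fx k p.1 * fy k p.2 = ∑ k, w k * fy k p.2 * fx k p.1 :=
        Finset.sum_congr rfl fun k _ => by ring
      rw [e1, e2]
      exact hp
    obtain ⟨σ, hσ⟩ := hident w' g2 g1 h1 h2 h4 h3 h6 h5 h8 h7 h9'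
    exact ⟨σ, fun k => (hσ k).1⟩
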